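/- For Hermitian matrices A, B, a density matrix ρ, and 1/2 ≤ λ < 1: I_ρ(A−B) + I_ρ(((λ−1)/λ)A − B) ≤ (1/λ)I_ρ(A) + (1/(1−λ))I_ρ(B) ≤ I_ρ(A−B) + I_ρ(A − (λ/(λ−1))B), with equality throughout when λ = 1/2. -/

import Mathlib

open Matrix Finset
open scoped ComplexOrder

lemma bohr_id1 (lam : ℝ) (h1 : 0 < lam) (h2 : lam < 1) (u v : ℂ) :
    (1/lam)*‖u‖^2 + (1/(1-lam))*‖v‖^2 - (‖u - v‖^2 + ‖(((lam-1)/lam : ℝ) : ℂ) * u - v‖^2)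
      = (2*lam-1)/(lam^2*(1-lam)) *
        (((1-lam)*u.re + lam*v.re)^2 + ((1-lam)*u.im + lam*v.im)^2) := by
  have h3 : (1:ℝ) - lam ≠ 0 := by linarith
  have h4 : lam ≠ 0 := ne_of_gt h1
  simp only [Complex.sq_norm, Complex.normSq_apply, Complex.sub_re,
    Complex.sub_im, Complex.mul_re, Complex.mul_im, Complex.ofReal_re, Complex.ofReal_im]
  field_simp
  ring

lemma bohr_id2 (lam : ℝ) (h1 : 0 < lam) (h2 : lam < 1) (u v : ℂ) :
    (‖u - v‖^2 + ‖u - (((lam/(lam-1) : ℝ)) : ℂ) * v‖^2) - ((1/lam)*‖u‖^2 + (1/(1-lam))*‖v‖^2)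
      = (2*lam-1)/(lam*(1-lam)^2) *
        (((1-lam)*u.re + lam*v.re)^2 + ((1-lam)*u.im + lam*v.im)^2) := by
  have h5 : (1:ℝ) - lam ≠ 0 := by linarith
  have h4 : lam ≠ 0 := ne_of_gt h1
  have h6 : lam - 1 ≠ 0 := by intro h; apply h5; linarith
  have hc : ((lam/(lam-1) : ℝ)) = -(lam/(1-lam)) := by
    rw [eq_comm, neg_eq_iff_eq_neg, ← neg_div, div_eq_div_iff h5 h6]; ring
  rw [hc]
  simp only [Complex.sq_norm, Complex.normSq_apply, Complex.sub_re,
    Complex.sub_im, Complex.mul_re, Complex.mul_im, Complex.ofReal_re, Complex.ofReal_im,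
    Complex.ofReal_neg, Complex.neg_re, Complex.neg_im]
  field_simp
  ring

lemma sum_assemble_le {d : ℕ} (X Y Z W : Fin d → Fin d → ℝ) (p q : ℝ)
    (h : ∀ i j, X i j + Y i j ≤ p * Z i j + q * W i j) :
    1/2 * ∑ i, ∑ j, X i j + 1/2 * ∑ i, ∑ j, Y i j ≤
      p * (1/2 * ∑ i, ∑ j, Z i j) + q * (1/2 * ∑ i, ∑ j, W i j) := by
  have H : ∑ i, ∑ j, (X i j + Y i j) ≤ ∑ i, ∑ j, (p * Z i j + q * W i j) :=
    Finset.sum_le_sum fun i _ => Finset.sum_le_sum fun j _ => h i j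
  simp only [Finset.sum_add_distrib, ← Finset.mul_sum] at H
  linarith

lemma sum_assemble_ge {d : ℕ} (X Y Z W : Fin d → Fin d → ℝ) (p q : ℝ)
    (h : ∀ i j, p * Z i j + q * W i j ≤ X i j + Y i j) :
    p * (1/2 * ∑ i, ∑ j, Z i j) + q * (1/2 * ∑ i, ∑ j, W i j) ≤
      1/2 * ∑ i, ∑ j, X i j + 1/2 * ∑ i, ∑ j, Y i j := by
  have H : ∑ i, ∑ j, (p * Z i j + q * W i j) ≤ ∑ i, ∑ j, (X i j + Y i j) :=
    Finset.sum_le_sum fun i _ => Finset.sum_le_sum fun j _ => h i j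
  simp only [Finset.sum_add_distrib, ← Finset.mul_sum] at H
  linarith

lemma sum_assemble_eq {d : ℕ} (X Y Z W : Fin d → Fin d → ℝ) (p q : ℝ)
    (h : ∀ i j, X i j + Y i j = p * Z i j + q * W i j) :
    1/2 * ∑ i, ∑ j, X i j + 1/2 * ∑ i, ∑ j, Y i j =
      p * (1/2 * ∑ i, ∑ j, Z i j) + q * (1/2 * ∑ i, ∑ j, W i j) := by
  have H : ∑ i, ∑ j, (X i j + Y i j) = ∑ i, ∑ j, (p * Z i j + q * W i j) :=
    Finset.sum_congr rfl fun i _ => Finset.sum_congr rfl fun j _ => h i j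
  simp only [Finset.sum_add_distrib, ← Finset.mul_sum] at H
  linarith

/-- Wigner–Yanase skew information `I_ρ(H) = (1/2)‖[√ρ, H]‖²` (Frobenius norm). -/
noncomputable def skewInfoR {d : ℕ} {ρ : Matrix (Fin d) (Fin d) ℂ}
    (hρ : ρ.PosSemidef) (H : Matrix (Fin d) (Fin d) ℂ) : ℝ :=
  1 / 2 * ∑ i, ∑ j, ‖((hρ.1.eigenvectorUnitary.1 * diagonal (((↑) : ℝ → ℂ) ∘ (√·) ∘ hρ.1.eigenvalues) *
      (star hρ.1.eigenvectorUnitary : Matrix (Fin d) (Fin d) ℂ)) * H -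
    H * (hρ.1.eigenvectorUnitary.1 * diagonal (((↑) : ℝ → ℂ) ∘ (√·) ∘ hρ.1.eigenvalues) *
      (star hρ.1.eigenvectorUnitary : Matrix (Fin d) (Fin d) ℂ))) i j‖ ^ 2

theorem skewInfo_weighted_uncertainty {d : ℕ} (ρ A B : Matrix (Fin d) (Fin d) ℂ)
    (hρ : ρ.PosSemidef) (hτ : ρ.trace = 1)
    (hA : A.IsHermitian) (hB : B.IsHermitian)
    (lam : ℝ) (hl1 : 1 / 2 ≤ lam) (hl2 : lam < 1) :
    (skewInfoR hρ (A - B) + skewInfoR hρ (((((lam - 1) / lam : ℝ)) : ℂ) • A - B) ≤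
        (1 / lam) * skewInfoR hρ A + (1 / (1 - lam)) * skewInfoR hρ B ∧
      (1 / lam) * skewInfoR hρ A + (1 / (1 - lam)) * skewInfoR hρ B ≤
        skewInfoR hρ (A - B) + skewInfoR hρ (A - (((lam / (lam - 1) : ℝ)) : ℂ) • B)) ∧
    (lam = 1 / 2 →
      skewInfoR hρ (A - B) + skewInfoR hρ (((((lam - 1) / lam : ℝ)) : ℂ) • A - B) =
          (1 / lam) * skewInfoR hρ A + (1 / (1 - lam)) * skewInfoR hρ B ∧
        (1 / lam) * skewInfoR hρ A + (1 / (1 - lam)) * skewInfoR hρ B =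
          skewInfoR hρ (A - B) + skewInfoR hρ (A - (((lam / (lam - 1) : ℝ)) : ℂ) • B)) := by
  have hl0 : 0 < lam := lt_of_lt_of_le (by norm_num) hl1
  set s := (hρ.1.eigenvectorUnitary.1 * diagonal (((↑) : ℝ → ℂ) ∘ (√·) ∘ hρ.1.eigenvalues) *
      (star hρ.1.eigenvectorUnitary : Matrix (Fin d) (Fin d) ℂ)) with hs
  set U : Matrix (Fin d) (Fin d) ℂ := s * A - A * s with hU
  set V : Matrix (Fin d) (Fin d) ℂ := s * B - B * s with hV
  set c₁ : ℂ := (((lam - 1) / lam : ℝ) : ℂ) with hc₁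
  set c₂ : ℂ := (((lam / (lam - 1) : ℝ)) : ℂ) with hc₂
  have e1 : s * (A - B) - (A - B) * s = U - V := by
    rw [hU, hV, Matrix.mul_sub, Matrix.sub_mul]; abel
  have e2 : s * (c₁ • A - B) - (c₁ • A - B) * s = c₁ • U - V := by
    rw [hU, hV, Matrix.mul_sub, Matrix.sub_mul, Matrix.mul_smul, Matrix.smul_mul, smul_sub]; abel
  have e3 : s * (A - c₂ • B) - (A - c₂ • B) * s = U - c₂ • V := by
    rw [hU, hV, Matrix.mul_sub, Matrix.sub_mul, Matrix.mul_smul, Matrix.smul_mul, smul_sub]; abel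
  have rAB : skewInfoR hρ (A - B) = 1/2 * ∑ i, ∑ j, ‖U i j - V i j‖ ^ 2 := by
    unfold skewInfoR
    simp only [← hs, e1]
    simp only [Matrix.sub_apply]
  have rA : skewInfoR hρ A = 1/2 * ∑ i, ∑ j, ‖U i j‖ ^ 2 := by
    unfold skewInfoR
    simp only [← hs, ← hU]
  have rB : skewInfoR hρ B = 1/2 * ∑ i, ∑ j, ‖V i j‖ ^ 2 := by
    unfold skewInfoR
    simp only [← hs, ← hV]
  have r1 : skewInfoR hρ (c₁ • A - B) = 1/2 * ∑ i, ∑ j, ‖c₁ * U i j - V i j‖ ^ 2 := by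
    unfold skewInfoR
    simp only [← hs, e2]
    simp only [Matrix.sub_apply, Matrix.smul_apply, smul_eq_mul]
  have r2 : skewInfoR hρ (A - c₂ • B) = 1/2 * ∑ i, ∑ j, ‖U i j - c₂ * V i j‖ ^ 2 := by
    unfold skewInfoR
    simp only [← hs, e3]
    simp only [Matrix.sub_apply, Matrix.smul_apply, smul_eq_mul]
  have hfac1 : 0 ≤ (2*lam-1)/(lam^2*(1-lam)) := by
    apply div_nonneg (by linarith)
    have : 0 < lam^2 := by positivity
    nlinarith
  have hfac2 : 0 ≤ (2*lam-1)/(lam*(1-lam)^2) := by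
    apply div_nonneg (by linarith)
    have : 0 < (1-lam)^2 := pow_pos (by linarith) 2
    nlinarith
  have sq_nn : ∀ u v : ℂ,
      0 ≤ ((1-lam)*u.re + lam*v.re)^2 + ((1-lam)*u.im + lam*v.im)^2 := by
    intro u v; positivity
  refine ⟨⟨?_, ?_⟩, fun hhalf => ⟨?_, ?_⟩⟩
  · rw [rAB, r1, rA, rB]
    apply sum_assemble_le
    intro i j
    have hid := bohr_id1 lam hl0 hl2 (U i j) (V i j)
    have := mul_nonneg hfac1 (sq_nn (U i j) (V i j))
    rw [← hc₁] at hid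
    linarith
  · rw [rAB, r2, rA, rB]
    apply sum_assemble_ge
    intro i j
    have hid := bohr_id2 lam hl0 hl2 (U i j) (V i j)
    have := mul_nonneg hfac2 (sq_nn (U i j) (V i j))
    rw [← hc₂] at hid
    linarith
  · rw [rAB, r1, rA, rB]
    apply sum_assemble_eq
    intro i j
    have hid := bohr_id1 lam hl0 hl2 (U i j) (V i j)
    rw [← hc₁] at hid
    have hz : (2*lam-1)/(lam^2*(1-lam)) = 0 := by rw [hhalf]; norm_num
    rw [hz, zero_mul] at hid
    linarith
  · rw [rAB, r2, rA, rB]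
    symm
    apply sum_assemble_eq
    intro i j
    have hid := bohr_id2 lam hl0 hl2 (U i j) (V i j)
    rw [← hc₂] at hid
    have hz : (2*lam-1)/(lam*(1-lam)^2) = 0 := by rw [hhalf]; norm_num
    rw [hz, zero_mul] at hid
    linarith
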